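/- For an oriented surface M² in ℝⁿ, the following are equivalent: (a) S^G = e(G)g − G*g_can = 0; (b) the Gauss map G is weakly conformal; (c) M² is pseudo-umbilical, i.e. ⟨H, B(X,Y)⟩ = |H|²⟨X,Y⟩ for all X,Y. -/
import Mathlib


open scoped RealInnerProductSpace

/-- for an oriented surface `M² ⊂ ℝⁿ` (pointwise, `V = T_pM` 2-dimensional,
`B` second fundamental form, `H` mean curvature, `Ric = K g`,
`G*g_can = 2⟨H,B⟩ − K g`, `e(G) = (1/2) trace G*g_can`, `S^G = e(G) g − G*g_can`),
the following are equivalent: (a) `S^G = 0`; (b) the Gauss map is weakly conformal,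
i.e. `G*g_can = λ g` with `λ ≥ 0`; (c) `M²` is pseudo-umbilical,
i.e. `⟪H, B(X,Y)⟫ = |H|² ⟪X,Y⟫`. -/
theorem stmt_10 {V W : Type*}
    [NormedAddCommGroup V] [InnerProductSpace ℝ V]
    [NormedAddCommGroup W] [InnerProductSpace ℝ W]
    (e : OrthonormalBasis (Fin 2) ℝ V)
    (B : V →ₗ[ℝ] V →ₗ[ℝ] W) (hBsymm : ∀ X Y : V, B X Y = B Y X)
    (H : W) (hH : H = (1 / 2 : ℝ) • (B (e 0) (e 0) + B (e 1) (e 1)))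
    (K : ℝ)
    (Gpull : V → V → ℝ)
    (hGpull : ∀ X Y : V, Gpull X Y = 2 * ⟪H, B X Y⟫ - K * ⟪X, Y⟫)
    (eG : ℝ) (heG : eG = (1 / 2) * ∑ i : Fin 2, Gpull (e i) (e i))
    (hGpos : ∀ X : V, 0 ≤ Gpull X X)
    (SG : V → V → ℝ) (hSG : ∀ X Y : V, SG X Y = eG * ⟪X, Y⟫ - Gpull X Y) :
    ((∀ X Y : V, SG X Y = 0) ↔ (∃ l : ℝ, 0 ≤ l ∧ ∀ X Y : V, Gpull X Y = l * ⟪X, Y⟫))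
    ∧ ((∀ X Y : V, SG X Y = 0) ↔ (∀ X Y : V, ⟪H, B X Y⟫ = ‖H‖ ^ 2 * ⟪X, Y⟫)) := by
  have he0 : ⟪e 0, e 0⟫ = 1 := by
    rw [real_inner_self_eq_norm_sq, e.orthonormal.1 0]; norm_num
  have he1 : ⟪e 1, e 1⟫ = 1 := by
    rw [real_inner_self_eq_norm_sq, e.orthonormal.1 1]; norm_num
  -- trace identity: ⟪H, B e0 e0⟫ + ⟪H, B e1 e1⟫ = 2‖H‖²
  have htr : ⟪H, B (e 0) (e 0)⟫ + ⟪H, B (e 1) (e 1)⟫ = 2 * ‖H‖ ^ 2 := by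
    have : ‖H‖ ^ 2 = ⟪H, H⟫ := (real_inner_self_eq_norm_sq H).symm
    rw [this]
    nth_rewrite 4 [hH]
    rw [inner_smul_right, inner_add_right]
    ring
  have heG' : eG = 2 * ‖H‖ ^ 2 - K := by
    rw [heG, Fin.sum_univ_two, hGpull, hGpull, he0, he1]
    linarith
  have hSG' : ∀ X Y : V, SG X Y = 2 * (‖H‖ ^ 2 * ⟪X, Y⟫ - ⟪H, B X Y⟫) := by
    intro X Y
    rw [hSG, hGpull, heG']
    ring
  constructor
  · constructor
    · intro h
      refine ⟨eG, ?_, ?_⟩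
      · have h0 := hGpos (e 0)
        have := hSG (e 0) (e 0)
        rw [h (e 0) (e 0), he0] at this
        linarith
      · intro X Y
        have := hSG X Y
        rw [h X Y] at this
        linarith
    · intro ⟨l, _, hl⟩ X Y
      have heGl : eG = l := by
        rw [heG, Fin.sum_univ_two, hl, hl, he0, he1]; ring
      rw [hSG, hl, heGl]; ring
  · constructor
    · intro h X Y
      have := hSG' X Y
      rw [h X Y] at this
      linarith
    · intro h X Y
      rw [hSG' X Y, h X Y]
      ring
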